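/- Let f be a map with values sorted so that f(b₁) ≥ f(b₂) ≥ ... over its domain, let j index an element with target value v > f(b_x) for a starting index x, and suppose there exists y ≤ |dom f| with Σ_{k=x}^{y} f(b_k) ≥ v/2; take y minimal with this property. Then Σ_{k=x}^{y} f(b_k) < v. -/

import Mathlib

/-- let `L` list the values of a map in nonincreasing order, let `v` satisfy
`v > L[x]`, and let `y` be the least index `≥ x` with `∑_{k=x}^{y} L[k] ≥ v/2`.
Then `∑_{k=x}^{y} L[k] < v`. -/
theorem minimal_block_sum_lt (L : List ℕ) (hL : L.Pairwise (· ≥ ·))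
    (x y v : ℕ) (hx : x < L.length) (hy : y < L.length) (hxy : x ≤ y)
    (hv : L.get ⟨x, hx⟩ < v)
    (hge : v ≤ 2 * ∑ k ∈ Finset.Icc x y, L.getD k 0)
    (hmin : ∀ y', x ≤ y' → y' < y → 2 * ∑ k ∈ Finset.Icc x y', L.getD k 0 < v) :
    ∑ k ∈ Finset.Icc x y, L.getD k 0 < v := by
  rcases eq_or_lt_of_le hxy with rfl | hlt
  · simpa [List.getD_eq_getElem, hx] using hv
  · obtain ⟨y', rfl⟩ : ∃ y', y = y' + 1 := ⟨y - 1, by omega⟩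
    have hxy' : x ≤ y' := by omega
    have hsplit : ∑ k ∈ Finset.Icc x (y' + 1), L.getD k 0
        = (∑ k ∈ Finset.Icc x y', L.getD k 0) + L.getD (y' + 1) 0 :=
      Finset.sum_Icc_succ_top (by omega) _
    have hS' : 2 * ∑ k ∈ Finset.Icc x y', L.getD k 0 < v := hmin y' hxy' (by omega)
    have hxval : L.getD x 0 ≤ ∑ k ∈ Finset.Icc x y', L.getD k 0 :=
      Finset.single_le_sum (f := fun k => L.getD k 0) (fun _ _ => Nat.zero_le _)
        (by simp [Finset.mem_Icc, hxy'])
    have hyx : L.getD (y' + 1) 0 ≤ L.getD x 0 := by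
      rw [List.getD_eq_getElem L 0 hy, List.getD_eq_getElem L 0 hx]
      exact hL.rel_get_of_lt (by simpa using hlt)
    omega
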